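/- Let δ > 0, a > 0, and let G : ℝ → ℝ be nonnegative and integrable on (0, δ]. Suppose that for every k ∈ ℕ, the integral of G over the interval ((99/100)^{k+1}·δ, (99/100)^k·δ] equals (99/100)^k·(δ·a/100). Then for every ū ∈ (0, δ], (20/21)·ū·a ≤ ∫ over (0, ū] of G ≤ (22/21)·ū·a; equivalently, the function f(ū) := (∫ over (0,ū] of G)/(ū·a) satisfies 20/21 ≤ f(ū) ≤ 22/21. -/

import Mathlib

open MeasureTheory

/-- Conclusion (B.1) of Appendix B: the constructed initial datum satisfies
`∫₀^ū |χ̂₀|² = f(ū)·ū·a` with `20/21 ≤ f ≤ 22/21` for all `ū ∈ (0, δ]`. -/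
theorem stmt_3 (δ a : ℝ) (hδ : 0 < δ) (ha : 0 < a)
    (G : ℝ → ℝ) (hGnn : ∀ x, 0 ≤ G x)
    (hGint : IntegrableOn G (Set.Ioc 0 δ))
    (hpiece : ∀ k : ℕ,
      ∫ x in Set.Ioc ((99/100:ℝ)^(k+1) * δ) ((99/100:ℝ)^k * δ), G x
        = (99/100:ℝ)^k * (δ * a / 100)) :
    ∀ ub : ℝ, ub ∈ Set.Ioc (0:ℝ) δ →
      ((20/21) * ub * a ≤ ∫ x in Set.Ioc (0:ℝ) ub, G x ∧
        (∫ x in Set.Ioc (0:ℝ) ub, G x) ≤ (22/21) * ub * a) ∧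
      (20/21 ≤ (∫ x in Set.Ioc (0:ℝ) ub, G x) / (ub * a) ∧
        (∫ x in Set.Ioc (0:ℝ) ub, G x) / (ub * a) ≤ 22/21) := by
  set q : ℝ := 99/100 with hq
  have hq0 : (0:ℝ) < q := by norm_num [hq]
  have hq1 : q < 1 := by norm_num [hq]
  set F : ℕ → ℝ := fun n => ∫ x in Set.Ioc (0:ℝ) (q ^ n * δ), G x with hF
  have hqn_le : ∀ n : ℕ, q ^ n * δ ≤ δ := by
    intro n
    have := pow_le_one₀ hq0.le hq1.le (n := n)
    nlinarith
  have hqn_pos : ∀ n : ℕ, 0 < q ^ n * δ := fun n => mul_pos (pow_pos hq0 n) hδ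
  have hint : ∀ n : ℕ, IntegrableOn G (Set.Ioc (0:ℝ) (q ^ n * δ)) := fun n =>
    hGint.mono_set (Set.Ioc_subset_Ioc_right (hqn_le n))
  -- recurrence
  have hrec : ∀ n : ℕ, F n = F (n + 1) + q ^ n * (δ * a / 100) := by
    intro n
    have hle : q ^ (n + 1) * δ ≤ q ^ n * δ := by
      have h : q ^ (n + 1) ≤ q ^ n := pow_le_pow_of_le_one hq0.le hq1.le (Nat.le_succ n)
      nlinarith
    have hsplit : Set.Ioc (0:ℝ) (q ^ (n+1) * δ) ∪ Set.Ioc (q ^ (n+1) * δ) (q ^ n * δ)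
        = Set.Ioc (0:ℝ) (q ^ n * δ) := Set.Ioc_union_Ioc_eq_Ioc (hqn_pos (n+1)).le hle
    have hdisj : Disjoint (Set.Ioc (0:ℝ) (q ^ (n+1) * δ)) (Set.Ioc (q ^ (n+1) * δ) (q ^ n * δ)) :=
      Set.Ioc_disjoint_Ioc_of_le le_rfl
    have := setIntegral_union hdisj measurableSet_Ioc
      (hint (n+1)) (hGint.mono_set (Set.Ioc_subset_Ioc (hqn_pos (n+1)).le (hqn_le n)))
      (f := G) (μ := volume)
    rw [hsplit] at this
    rw [hF]
    simp only [this, hpiece n]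
  -- F 0 = F n + δ*a*(1 - q^n)
  have hsum : ∀ n : ℕ, F 0 = F n + δ * a * (1 - q ^ n) := by
    intro n
    induction n with
    | zero => simp
    | succ n ih =>
      rw [ih, hrec n, show q ^ (n+1) = q ^ n * q from pow_succ q n, hq]
      ring
  -- F n → 0
  have htend : Filter.Tendsto F Filter.atTop (nhds 0) := by
    have hanti : Antitone (fun n : ℕ => Set.Ioc (0:ℝ) (q ^ n * δ)) := by
      intro m n hmn
      exact Set.Ioc_subset_Ioc_right (by
        have := pow_le_pow_of_le_one hq0.le hq1.le hmn
        nlinarith)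
    have h0 : (⋂ n : ℕ, Set.Ioc (0:ℝ) (q ^ n * δ)) = ∅ := by
      ext x
      simp only [Set.mem_iInter, Set.mem_Ioc, Set.mem_empty_iff_false, iff_false, not_forall]
      by_contra h
      push_neg at h
      obtain ⟨hx0, hx⟩ : 0 < x ∧ ∀ n, x ≤ q ^ n * δ := ⟨(h 0).1, fun n => (h n).2⟩
      have : Filter.Tendsto (fun n : ℕ => q ^ n * δ) Filter.atTop (nhds 0) := by
        simpa using (tendsto_pow_atTop_nhds_zero_of_lt_one hq0.le hq1).mul_const δ
      obtain ⟨n, hn⟩ := ((this.eventually (gt_mem_nhds hx0)).exists)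
      exact absurd (hx n) (not_le.2 hn)
    have := tendsto_setIntegral_of_antitone (μ := volume) (f := G)
      (fun n : ℕ => measurableSet_Ioc) hanti ⟨0, hint 0⟩
    rw [h0] at this
    simpa using this
  -- F 0 = δ * a
  have hF0 : F 0 = δ * a := by
    have h1 : Filter.Tendsto (fun n : ℕ => F n + δ * a * (1 - q ^ n)) Filter.atTop
        (nhds (0 + δ * a * (1 - 0))) := by
      exact htend.add ((tendsto_const_nhds.sub
        (tendsto_pow_atTop_nhds_zero_of_lt_one hq0.le hq1)).const_mul _)
    have h2 : Filter.Tendsto (fun _ : ℕ => F 0) Filter.atTop (nhds (F 0)) := tendsto_const_nhds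
    have := tendsto_nhds_unique (h2.congr (fun n => hsum n)) h1
    simpa using this
  have hFn : ∀ n : ℕ, F n = q ^ n * (δ * a) := by
    intro n
    have := hsum n
    rw [hF0] at this
    nlinarith [this]
  -- main
  intro ub hub
  obtain ⟨hub0, hubδ⟩ := hub
  -- find n with q^(n+1)*δ < ub ≤ q^n*δ
  have hex : ∃ n : ℕ, q ^ n * δ < ub := by
    have : Filter.Tendsto (fun n : ℕ => q ^ n * δ) Filter.atTop (nhds 0) := by
      simpa using (tendsto_pow_atTop_nhds_zero_of_lt_one hq0.le hq1).mul_const δ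
    exact ((this.eventually (gt_mem_nhds hub0)).exists)
  classical
  have hmspec0 : q ^ Nat.find hex * δ < ub := Nat.find_spec hex
  have hm0 : Nat.find hex ≠ 0 := by
    intro h
    rw [h] at hmspec0
    simp at hmspec0
    linarith
  obtain ⟨n, hmn⟩ : ∃ n, Nat.find hex = n + 1 :=
    ⟨Nat.find hex - 1, (Nat.succ_pred_eq_of_ne_zero hm0).symm⟩
  have hmspec : q ^ (n + 1) * δ < ub := hmn ▸ hmspec0
  have hubn : ub ≤ q ^ n * δ := le_of_not_gt (Nat.find_min hex (by omega))
  -- monotonicity of integral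
  have hGae : (0:ℝ → ℝ) ≤ᵐ[volume.restrict (Set.Ioc (0:ℝ) (q ^ n * δ))] G :=
    Filter.Eventually.of_forall hGnn
  have hlow : F (n+1) ≤ ∫ x in Set.Ioc (0:ℝ) ub, G x := by
    apply setIntegral_mono_set (hGint.mono_set (Set.Ioc_subset_Ioc_right hubδ))
      (Filter.Eventually.of_forall hGnn)
    exact Filter.Eventually.of_forall (Set.Ioc_subset_Ioc_right hmspec.le)
  have hhigh : (∫ x in Set.Ioc (0:ℝ) ub, G x) ≤ F n := by
    apply setIntegral_mono_set (hint n) (Filter.Eventually.of_forall hGnn)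
    exact Filter.Eventually.of_forall (Set.Ioc_subset_Ioc_right hubn)
  rw [hFn (n+1)] at hlow
  rw [hFn n] at hhigh
  have hqn : (0:ℝ) < q ^ n := pow_pos hq0 n
  have key1 : (20/21) * ub * a ≤ ∫ x in Set.Ioc (0:ℝ) ub, G x := by
    refine le_trans ?_ hlow
    have : (20/21) * ub ≤ q ^ (n+1) * δ := by
      have : q ^ (n+1) * δ = q * (q ^ n * δ) := by ring
      rw [this, hq]
      nlinarith
    nlinarith
  have key2 : (∫ x in Set.Ioc (0:ℝ) ub, G x) ≤ (22/21) * ub * a := by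
    refine le_trans hhigh ?_
    have h1 : q ^ n * δ < (100/99) * ub := by
      have : q ^ (n+1) * δ = q * (q ^ n * δ) := by ring
      rw [hq] at hmspec ⊢
      nlinarith [pow_succ (99/100:ℝ) n]
    nlinarith
  have hua : 0 < ub * a := mul_pos hub0 ha
  refine ⟨⟨key1, key2⟩, ?_, ?_⟩
  · rw [le_div_iff₀ hua]; nlinarith
  · rw [div_le_iff₀ hua]; nlinarith
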